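/- Let $V = [n]$ and fix positive integers $r, k, a$ with $n \ge ra$ and $r > k \ge 1$, and let $i$ be a nonnegative integer with $i \le (\lfloor n/(a-1) \rfloor - k)/2$. For any family $\mathcal{T} = \{T_1, \ldots, T_{a-1}\}$ of $(k+2i)$-element subsets of $V$, the number of $r$-element subsets $E \subseteq V$ with $|E \cap T_j| \ge k+i$ for some $j \in [a-1]$ is at most the corresponding number for any family $\mathcal{T}' = \{T_1', \ldots, T_{a-1}'\}$ of $a-1$ pairwise disjoint $(k+2i)$-element subsets of $V$. -/

import Mathlib

open Finset

variable {α : Type*} [Fintype α] [DecidableEq α]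

/-- The set of `r`-subsets capturing the family `S` with threshold `t`. -/
def captSet (t r : ℕ) {m : ℕ} (S : Fin m → Finset α) : Finset (Finset α) :=
  (Finset.powersetCard r (Finset.univ : Finset α)).filter
    (fun E => ∃ j, t ≤ (E ∩ S j).card)

lemma image_swap_eq {x y : α} {W : Finset α} (hx : x ∈ W) (hy : y ∉ W) :
    W.image (Equiv.swap x y) = insert y (W.erase x) := by
  ext a
  simp only [mem_image, mem_insert, mem_erase]
  constructor
  · rintro ⟨b, hb, rfl⟩
    rcases eq_or_ne b x with rfl | hbx
    · simp [Equiv.swap_apply_left]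
    rcases eq_or_ne b y with rfl | hby
    · exact absurd hb hy
    · rw [Equiv.swap_apply_of_ne_of_ne hbx hby]
      exact Or.inr ⟨hbx, hb⟩
  · rintro (rfl | ⟨hax, ha⟩)
    · exact ⟨x, hx, Equiv.swap_apply_left _ _⟩
    · refine ⟨a, ha, ?_⟩
      exact Equiv.swap_apply_of_ne_of_ne hax (fun h => hy (h ▸ ha))

set_option linter.unusedSectionVars false

lemma mem_captSet {t r m : ℕ} {S : Fin m → Finset α} {E : Finset α} :
    E ∈ captSet t r S ↔ E.card = r ∧ ∃ j, t ≤ (E ∩ S j).card := by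
  simp [captSet, Finset.mem_powersetCard, Finset.subset_univ]

lemma captSet_swap (t r : ℕ) {m : ℕ} (S : Fin m → Finset α) (j₂ : Fin m)
    (x y : α) (hx : x ∈ S j₂) (hy : ∀ j, y ∉ S j) :
    (captSet t r S).card ≤
      (captSet t r (Function.update S j₂ (insert y ((S j₂).erase x)))).card := by
  classical
  set S' := Function.update S j₂ (insert y ((S j₂).erase x)) with hS'
  have hS'j₂ : S' j₂ = (S j₂).image (Equiv.swap x y) := by
    rw [image_swap_eq hx (hy j₂), hS', Function.update_self]
  have hS'ne : ∀ j, j ≠ j₂ → S' j = S j := fun j hj => Function.update_of_ne hj _ _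
  set τ : Finset α → Finset α := fun E => E.image (Equiv.swap x y) with hτ
  have hτcard : ∀ E : Finset α, (τ E).card = E.card := fun E =>
    Finset.card_image_of_injective _ (Equiv.injective _)
  have hτinter : ∀ (E W : Finset α), (τ E) ∩ (W.image (Equiv.swap x y)) = τ (E ∩ W) := by
    intro E W
    simp only [hτ]
    rw [← Finset.image_inter _ _ (Equiv.injective _)]
  -- key facts about a set in `captSet S` but not in `captSet S'`
  have key : ∀ E : Finset α, E ∈ captSet t r S → E ∉ captSet t r S' →
      x ∈ E ∧ y ∉ E ∧ (E ∩ S j₂).card = t ∧ 1 ≤ t := by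
    intro E hE hE'
    rw [mem_captSet] at hE hE'
    push_neg at hE'
    obtain ⟨hEr, j, hj⟩ := hE
    have hE'all := hE' hEr
    have hj₂ : t ≤ (E ∩ S j₂).card := by
      rcases eq_or_ne j j₂ with rfl | hne
      · exact hj
      · have := hE'all j
        rw [hS'ne j hne] at this
        omega
    have ht1 : 1 ≤ t := by
      have := hE'all j₂
      omega
    have hyE : y ∉ E := by
      intro hyE
      have h1 : E ∩ S' j₂ = insert y ((E ∩ S j₂).erase x) := by
        rw [hS', Function.update_self, inter_insert_of_mem hyE, inter_erase]
      have h2 : y ∉ (E ∩ S j₂).erase x := fun h =>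
        hy j₂ (Finset.mem_of_mem_erase h |> Finset.mem_inter.mp |>.2)
      have h3 : t - 1 ≤ ((E ∩ S j₂).erase x).card := by
        have := Finset.card_erase_le (s := E ∩ S j₂) (a := x)
        have := Finset.card_erase_of_mem (s := E ∩ S j₂) (a := x)
        rcases Finset.decidableMem x (E ∩ S j₂) with h | h
        · have : ((E ∩ S j₂).erase x).card = (E ∩ S j₂).card := by
            rw [Finset.erase_eq_of_notMem h]
          omega
        · have := Finset.card_erase_of_mem h
          omega
      have := hE'all j₂
      rw [h1, Finset.card_insert_of_notMem h2] at this
      omega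
    have hxE : x ∈ E := by
      by_contra hxE
      have h1 : E ∩ S' j₂ = E ∩ S j₂ := by
        rw [hS', Function.update_self, inter_insert_of_notMem hyE, inter_erase,
          Finset.erase_eq_of_notMem (fun h => hxE (Finset.mem_inter.mp h).1)]
      have := hE'all j₂
      rw [h1] at this
      omega
    have hcard : (E ∩ S j₂).card = t := by
      have h1 : E ∩ S' j₂ = (E ∩ S j₂).erase x := by
        rw [hS', Function.update_self, inter_insert_of_notMem hyE, inter_erase]
      have hxm : x ∈ E ∩ S j₂ := Finset.mem_inter.mpr ⟨hxE, hx⟩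
      have := hE'all j₂
      rw [h1, Finset.card_erase_of_mem hxm] at this
      omega
    exact ⟨hxE, hyE, hcard, ht1⟩
  -- τ of a bad set is captured by S'
  have hmaps : ∀ E ∈ captSet t r S, (if E ∈ captSet t r S' then E else τ E) ∈ captSet t r S' := by
    intro E hE
    split_ifs with h
    · exact h
    obtain ⟨hxE, hyE, hcard, ht1⟩ := key E hE h
    rw [mem_captSet]
    refine ⟨by rw [hτcard]; exact (mem_captSet.mp hE).1, j₂, ?_⟩
    rw [hS'j₂, hτinter, hτcard, hcard]
  -- τ of a bad set is not captured by S
  have hτbad : ∀ E : Finset α, E ∈ captSet t r S → E ∉ captSet t r S' →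
      τ E ∉ captSet t r S := by
    intro E hE hE'
    obtain ⟨hxE, hyE, hcard, ht1⟩ := key E hE hE'
    rw [mem_captSet] at hE'
    push_neg at hE'
    have hE'all := hE' (mem_captSet.mp hE).1
    have hτE : τ E = insert y (E.erase x) := image_swap_eq hxE hyE
    rw [mem_captSet]
    rintro ⟨-, j, hj⟩
    have hinter : τ E ∩ S j = (E ∩ S j).erase x := by
      rw [hτE, insert_inter_of_notMem (hy j), erase_inter]
    rw [hinter] at hj
    rcases eq_or_ne j j₂ with rfl | hne
    · rw [Finset.card_erase_of_mem (Finset.mem_inter.mpr ⟨hxE, hx⟩), hcard] at hj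
      omega
    · have h1 := hE'all j
      rw [hS'ne j hne] at h1
      have := Finset.card_erase_le (s := E ∩ S j) (a := x)
      omega
  -- conclude by an injection
  apply Finset.card_le_card_of_injOn (fun E => if E ∈ captSet t r S' then E else τ E) hmaps
  intro E₁ h₁ E₂ h₂ heq
  simp only at heq
  by_cases c₁ : E₁ ∈ captSet t r S' <;> by_cases c₂ : E₂ ∈ captSet t r S'
  · rwa [if_pos c₁, if_pos c₂] at heq
  · rw [if_pos c₁, if_neg c₂] at heq
    exact absurd (heq ▸ h₁) (hτbad E₂ h₂ c₂)
  · rw [if_neg c₁, if_pos c₂] at heq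
    exact absurd (heq ▸ h₂) (hτbad E₁ h₁ c₁)
  · rw [if_neg c₁, if_neg c₂] at heq
    exact Finset.image_injective (Equiv.injective _) heq

lemma captSet_le_of_perm (t r : ℕ) {m : ℕ} (S T : Fin m → Finset α)
    (σ : Equiv.Perm α) (h : ∀ j, ∀ v ∈ S j, σ v ∈ T j) :
    (captSet t r S).card ≤ (captSet t r T).card := by
  classical
  apply Finset.card_le_card_of_injOn (fun E => E.image σ)
  · intro E hE
    rw [Finset.mem_coe, mem_captSet] at hE ⊢
    obtain ⟨hEr, j, hj⟩ := hE
    refine ⟨by rw [Finset.card_image_of_injective _ (Equiv.injective _)]; exact hEr, j, ?_⟩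
    calc t ≤ (E ∩ S j).card := hj
    _ = ((E ∩ S j).image σ).card :=
        (Finset.card_image_of_injective _ (Equiv.injective _)).symm
    _ ≤ (E.image σ ∩ T j).card := by
        apply Finset.card_le_card
        intro w hw
        obtain ⟨v, hv, rfl⟩ := Finset.mem_image.mp hw
        obtain ⟨hv1, hv2⟩ := Finset.mem_inter.mp hv
        exact Finset.mem_inter.mpr ⟨Finset.mem_image_of_mem _ hv1, h j v hv2⟩
  · intro E₁ _ E₂ _ heq
    exact Finset.image_injective (Equiv.injective _) heq

lemma exists_perm_of_disjoint {m : ℕ} (S T : Fin m → Finset α)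
    (hS : ∀ j₁ j₂, j₁ ≠ j₂ → Disjoint (S j₁) (S j₂))
    (hT : ∀ j₁ j₂, j₁ ≠ j₂ → Disjoint (T j₁) (T j₂))
    (hcard : ∀ j, (S j).card = (T j).card) :
    ∃ σ : Equiv.Perm α, ∀ j, ∀ v ∈ S j, σ v ∈ T j := by
  classical
  set U : Finset α := Finset.univ.biUnion S with hU
  set U' : Finset α := Finset.univ.biUnion T with hU'
  have hUcard : U.card = U'.card := by
    rw [hU, hU', Finset.card_biUnion (fun a _ b _ hab => hS a b hab),
      Finset.card_biUnion (fun a _ b _ hab => hT a b hab)]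
    exact Finset.sum_congr rfl fun j _ => hcard j
  have e : ∀ j, (S j : Finset α) ≃ (T j : Finset α) := fun j =>
    Fintype.equivOfCardEq (by rw [Fintype.card_coe, Fintype.card_coe, hcard])
  have g : (Uᶜ : Finset α) ≃ (U'ᶜ : Finset α) :=
    Fintype.equivOfCardEq (by
      rw [Fintype.card_coe, Fintype.card_coe, Finset.card_compl, Finset.card_compl, hUcard])
  set f : α → α := fun v =>
    if h : ∃ j, v ∈ S j then (e h.choose ⟨v, h.choose_spec⟩ : α)
    else (g ⟨v, by simp only [Finset.mem_compl, hU, Finset.mem_biUnion]; push_neg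
                   intro j _; exact fun hv => h ⟨j, hv⟩⟩ : α) with hf
  have hfS : ∀ j, ∀ v ∈ S j, f v ∈ T j := by
    intro j v hv
    have hex : ∃ j', v ∈ S j' := ⟨j, hv⟩
    have hj' : hex.choose = j := by
      by_contra hne
      exact Finset.disjoint_left.mp (hS _ _ hne) hex.choose_spec hv
    rw [hf]
    simp only [dif_pos hex]
    rw [← hj']
    exact (e hex.choose _).2
  have hinj : Function.Injective f := by
    intro v₁ v₂ hv
    rw [hf] at hv
    by_cases h₁ : ∃ j, v₁ ∈ S j <;> by_cases h₂ : ∃ j, v₂ ∈ S j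
    · simp only [dif_pos h₁, dif_pos h₂] at hv
      have heval : ∀ (v : α) (h : ∃ j, v ∈ S j) (j : Fin m) (hvj : v ∈ S j),
          (↑(e h.choose ⟨v, h.choose_spec⟩) : α) = (↑(e j ⟨v, hvj⟩) : α) := by
        intro v h j hvj
        have hj : h.choose = j := by
          by_contra hne
          exact Finset.disjoint_left.mp (hS _ _ hne) h.choose_spec hvj
        subst hj
        rfl
      obtain ⟨j₁, hj₁⟩ := h₁
      obtain ⟨j₂, hj₂⟩ := h₂
      rw [heval v₁ _ j₁ hj₁, heval v₂ _ j₂ hj₂] at hv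
      have hj : j₁ = j₂ := by
        by_contra hne
        refine Finset.disjoint_left.mp (hT _ _ hne) (e j₁ ⟨v₁, hj₁⟩).2 ?_
        rw [hv]; exact (e j₂ ⟨v₂, hj₂⟩).2
      subst hj
      have h3 := (e j₁).injective (Subtype.coe_injective hv)
      exact congrArg Subtype.val h3
    · exfalso
      simp only [dif_pos h₁, dif_neg h₂] at hv
      have m1 : (e h₁.choose ⟨v₁, h₁.choose_spec⟩ : α) ∈ U' := by
        rw [hU']; exact Finset.mem_biUnion.mpr ⟨h₁.choose, Finset.mem_univ _, (e h₁.choose _).2⟩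
      rw [hv] at m1
      exact Finset.mem_compl.mp (g _).2 m1
    · exfalso
      simp only [dif_neg h₁, dif_pos h₂] at hv
      have m1 : (e h₂.choose ⟨v₂, h₂.choose_spec⟩ : α) ∈ U' := by
        rw [hU']; exact Finset.mem_biUnion.mpr ⟨h₂.choose, Finset.mem_univ _, (e h₂.choose _).2⟩
      rw [← hv] at m1
      exact Finset.mem_compl.mp (g _).2 m1
    · simp only [dif_neg h₁, dif_neg h₂] at hv
      have := Subtype.coe_injective hv
      have := g.injective this
      exact congrArg Subtype.val this
  exact ⟨Equiv.ofBijective f (Finite.injective_iff_bijective.mp hinj), hfS⟩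

lemma captSet_le_of_disjoint (t r s : ℕ) {m : ℕ} (hms : m * s ≤ Fintype.card α) :
    ∀ (N : ℕ) (S : Fin m → Finset α),
      Fintype.card α - (Finset.univ.biUnion S).card ≤ N →
      (∀ j, (S j).card = s) →
      ∀ (S' : Fin m → Finset α), (∀ j, (S' j).card = s) →
        (∀ j₁ j₂, j₁ ≠ j₂ → Disjoint (S' j₁) (S' j₂)) →
        (captSet t r S).card ≤ (captSet t r S').card := by
  classical
  intro N
  induction N with
  | zero =>
    intro S hm hc S' hc' hd'
    by_cases hd : ∀ j₁ j₂, j₁ ≠ j₂ → Disjoint (S j₁) (S j₂)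
    · obtain ⟨σ, hσ⟩ := exists_perm_of_disjoint S S' hd hd' (fun j => by rw [hc j, hc' j])
      exact captSet_le_of_perm t r S S' σ hσ
    · exfalso
      push_neg at hd
      obtain ⟨j₁, j₂, hne, hnd⟩ := hd
      obtain ⟨x, hx₁, hx₂⟩ := Finset.not_disjoint_iff.mp hnd
      -- the union has card < m * s ≤ card α, contradiction with measure ≤ 0
      have hsub : Finset.univ.biUnion S ⊆
          insert x (Finset.univ.biUnion fun j => (S j).erase x) := by
        intro v hv
        obtain ⟨j, -, hvj⟩ := Finset.mem_biUnion.mp hv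
        rcases eq_or_ne v x with rfl | hvx
        · exact Finset.mem_insert_self _ _
        · exact Finset.mem_insert_of_mem
            (Finset.mem_biUnion.mpr ⟨j, Finset.mem_univ _, Finset.mem_erase.mpr ⟨hvx, hvj⟩⟩)
      have h1 : (Finset.univ.biUnion fun j => (S j).erase x).card ≤
          ∑ j, ((S j).erase x).card := Finset.card_biUnion_le
      have h2 : ∑ j, ((S j).erase x).card + 2 ≤ ∑ j, (S j).card := by
        have hper : ∀ j : Fin m,
            ((S j).erase x).card + (if x ∈ S j then 1 else 0) = (S j).card := by
          intro j
          split_ifs with h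
          · exact Finset.card_erase_add_one h
          · rw [Finset.erase_eq_of_notMem h, add_zero]
        have hsum : ∑ j, ((S j).erase x).card + ∑ j, (if x ∈ S j then 1 else 0)
            = ∑ j, (S j).card := by
          rw [← Finset.sum_add_distrib]
          exact Finset.sum_congr rfl fun j _ => hper j
        have h2' : 2 ≤ ∑ j, (if x ∈ S j then 1 else 0) := by
          have : ∑ j ∈ ({j₁, j₂} : Finset (Fin m)), (if x ∈ S j then 1 else 0) = 2 := by
            rw [Finset.sum_pair hne, if_pos hx₁, if_pos hx₂]
          calc 2 = ∑ j ∈ ({j₁, j₂} : Finset (Fin m)), (if x ∈ S j then 1 else 0) := this.symm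
          _ ≤ ∑ j, (if x ∈ S j then 1 else 0) :=
            Finset.sum_le_sum_of_subset (Finset.subset_univ _)
        omega
      have h3 : ∑ j, (S j).card = m * s := by
        rw [Finset.sum_congr rfl (fun j _ => hc j), Finset.sum_const, Finset.card_univ,
          Fintype.card_fin, smul_eq_mul]
      have h4 := Finset.card_le_card hsub
      have h5 := Finset.card_insert_le x (Finset.univ.biUnion fun j => (S j).erase x)
      omega
  | succ n ih =>
    intro S hm hc S' hc' hd'
    by_cases hd : ∀ j₁ j₂, j₁ ≠ j₂ → Disjoint (S j₁) (S j₂)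
    · obtain ⟨σ, hσ⟩ := exists_perm_of_disjoint S S' hd hd' (fun j => by rw [hc j, hc' j])
      exact captSet_le_of_perm t r S S' σ hσ
    · push_neg at hd
      obtain ⟨j₁, j₂, hne, hnd⟩ := hd
      obtain ⟨x, hx₁, hx₂⟩ := Finset.not_disjoint_iff.mp hnd
      -- find a fresh element y
      have hsub : Finset.univ.biUnion S ⊆
          insert x (Finset.univ.biUnion fun j => (S j).erase x) := by
        intro v hv
        obtain ⟨j, -, hvj⟩ := Finset.mem_biUnion.mp hv
        rcases eq_or_ne v x with rfl | hvx
        · exact Finset.mem_insert_self _ _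
        · exact Finset.mem_insert_of_mem
            (Finset.mem_biUnion.mpr ⟨j, Finset.mem_univ _, Finset.mem_erase.mpr ⟨hvx, hvj⟩⟩)
      have h1 : (Finset.univ.biUnion fun j => (S j).erase x).card ≤
          ∑ j, ((S j).erase x).card := Finset.card_biUnion_le
      have h2 : ∑ j, ((S j).erase x).card + 2 ≤ ∑ j, (S j).card := by
        have hper : ∀ j : Fin m,
            ((S j).erase x).card + (if x ∈ S j then 1 else 0) = (S j).card := by
          intro j
          split_ifs with h
          · exact Finset.card_erase_add_one h
          · rw [Finset.erase_eq_of_notMem h, add_zero]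
        have hsum : ∑ j, ((S j).erase x).card + ∑ j, (if x ∈ S j then 1 else 0)
            = ∑ j, (S j).card := by
          rw [← Finset.sum_add_distrib]
          exact Finset.sum_congr rfl fun j _ => hper j
        have h2' : 2 ≤ ∑ j, (if x ∈ S j then 1 else 0) := by
          have : ∑ j ∈ ({j₁, j₂} : Finset (Fin m)), (if x ∈ S j then 1 else 0) = 2 := by
            rw [Finset.sum_pair hne, if_pos hx₁, if_pos hx₂]
          calc 2 = ∑ j ∈ ({j₁, j₂} : Finset (Fin m)), (if x ∈ S j then 1 else 0) := this.symm
          _ ≤ ∑ j, (if x ∈ S j then 1 else 0) :=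
            Finset.sum_le_sum_of_subset (Finset.subset_univ _)
        omega
      have h3 : ∑ j, (S j).card = m * s := by
        rw [Finset.sum_congr rfl (fun j _ => hc j), Finset.sum_const, Finset.card_univ,
          Fintype.card_fin, smul_eq_mul]
      have h4 := Finset.card_le_card hsub
      have h5 := Finset.card_insert_le x (Finset.univ.biUnion fun j => (S j).erase x)
      have hlt : (Finset.univ.biUnion S).card < Fintype.card α := by omega
      have hney : Finset.univ.biUnion S ≠ Finset.univ := by
        intro h
        rw [h, Finset.card_univ] at hlt
        omega
      obtain ⟨y, hy⟩ : ∃ y, y ∉ Finset.univ.biUnion S := by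
        by_contra hcon
        push_neg at hcon
        exact hney (Finset.eq_univ_iff_forall.mpr hcon)
      have hyS : ∀ j, y ∉ S j := fun j hyj =>
        hy (Finset.mem_biUnion.mpr ⟨j, Finset.mem_univ _, hyj⟩)
      set S₂ := Function.update S j₂ (insert y ((S j₂).erase x)) with hS₂
      have step := captSet_swap t r S j₂ x y hx₂ hyS
      refine le_trans step (ih S₂ ?_ ?_ S' hc' hd')
      · -- measure decreases
        have hsub₂ : Finset.univ.biUnion S ⊆ Finset.univ.biUnion S₂ := by
          intro v hv
          obtain ⟨j, -, hvj⟩ := Finset.mem_biUnion.mp hv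
          rcases eq_or_ne j j₂ with rfl | hnej
          · rcases eq_or_ne v x with rfl | hvx
            · exact Finset.mem_biUnion.mpr ⟨j₁, Finset.mem_univ _, by
                rw [hS₂, Function.update_of_ne hne]; exact hx₁⟩
            · exact Finset.mem_biUnion.mpr ⟨j, Finset.mem_univ _, by
                rw [hS₂, Function.update_self]
                exact Finset.mem_insert_of_mem (Finset.mem_erase.mpr ⟨hvx, hvj⟩)⟩
          · exact Finset.mem_biUnion.mpr ⟨j, Finset.mem_univ _, by
              rw [hS₂, Function.update_of_ne hnej]; exact hvj⟩
        have hymem : y ∈ Finset.univ.biUnion S₂ := Finset.mem_biUnion.mpr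
          ⟨j₂, Finset.mem_univ _, by rw [hS₂, Function.update_self]; exact Finset.mem_insert_self _ _⟩
        have hss : Finset.univ.biUnion S ⊂ Finset.univ.biUnion S₂ :=
          Finset.ssubset_iff_of_subset hsub₂ |>.mpr ⟨y, hymem, hy⟩
        have := Finset.card_lt_card hss
        have h9 := Finset.card_le_univ (Finset.univ.biUnion S₂)
        omega
      · -- cards preserved
        intro j
        rcases eq_or_ne j j₂ with rfl | hnej
        · rw [hS₂, Function.update_self, Finset.card_insert_of_notMem
            (fun h => hyS j (Finset.mem_of_mem_erase h)), Finset.card_erase_of_mem hx₂, hc j]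
          have : 1 ≤ s := by
            have := Finset.card_pos.mpr ⟨x, hx₂⟩
            rw [hc j] at this
            omega
          omega
        · rw [hS₂, Function.update_of_ne hnej]
          exact hc j

/-- Among families of `a-1` sets of size `k+2i` in `[n]`, the number of
`r`-sets capturing the family is maximized when the family's members are pairwise disjoint. -/
theorem stmt_1 (n r k a i : ℕ) (hn : r * a ≤ n) (hk : 1 ≤ k) (hkr : k < r) (ha : 1 ≤ a)
    (hi : k + 2 * i ≤ n / (a - 1))
    (T T' : Fin (a - 1) → Finset (Fin n))
    (hT : ∀ j, (T j).card = k + 2 * i)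
    (hT' : ∀ j, (T' j).card = k + 2 * i)
    (hdisj : ∀ j₁ j₂, j₁ ≠ j₂ → Disjoint (T' j₁) (T' j₂)) :
    ((Finset.powersetCard r (Finset.univ : Finset (Fin n))).filter
        (fun E => ∃ j, k + i ≤ (E ∩ T j).card)).card ≤
      ((Finset.powersetCard r (Finset.univ : Finset (Fin n))).filter
        (fun E => ∃ j, k + i ≤ (E ∩ T' j).card)).card := by
  have hms : (a - 1) * (k + 2 * i) ≤ Fintype.card (Fin n) := by
    rw [Fintype.card_fin]
    calc (a - 1) * (k + 2 * i) ≤ (a - 1) * (n / (a - 1)) :=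
          Nat.mul_le_mul_left _ hi
    _ ≤ n := Nat.mul_div_le n (a - 1)
  exact captSet_le_of_disjoint (k + i) r (k + 2 * i) hms n T
    (by
      have := Fintype.card_fin n
      omega)
    hT T' hT' hdisj
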